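/- Let G be a graph with vertex set {v_1,...,v_n} and let D_G be its extended double cover: the bipartite graph on parts X = {x_1,...,x_n} and Y = {y_1,...,y_n} with x_i adjacent to y_j if and only if i = j or v_i is adjacent to v_j in G. Then for every k ≥ 1, G is k-CFCN*-choosable if and only if D_G is k-CFON*-choosable. -/

import Mathlib

/-- `G` is `k`-CFON*-choosable. -/
def CFONstarChoosable {V : Type*} (G : SimpleGraph V) (k : ℕ) : Prop :=
  ∀ L : V → Finset ℕ, (∀ v, (L v).card = k) →
    ∃ c : V → Option ℕ, (∀ v a, c v = some a → a ∈ L v) ∧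
      ∀ v : V, ∃ a, ∃! u, G.Adj v u ∧ c u = some a

/-- `G` is `k`-CFCN*-choosable. -/
def CFCNstarChoosable {V : Type*} (G : SimpleGraph V) (k : ℕ) : Prop :=
  ∀ L : V → Finset ℕ, (∀ v, (L v).card = k) →
    ∃ c : V → Option ℕ, (∀ v a, c v = some a → a ∈ L v) ∧
      ∀ v : V, ∃ a, ∃! u, (G.Adj v u ∨ u = v) ∧ c u = some a

/-- The extended double cover of `G`. -/
def extDoubleCover {V : Type*} (G : SimpleGraph V) : SimpleGraph (V ⊕ V) where
  Adj x y := match x, y with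
    | Sum.inl i, Sum.inr j => i = j ∨ G.Adj i j
    | Sum.inr j, Sum.inl i => i = j ∨ G.Adj i j
    | _, _ => False
  symm := by constructor; rintro (i | i) (j | j) h <;> exact h
  loopless := by constructor; rintro (i | i) h <;> exact h

lemma edc_adj_lr {V : Type*} (G : SimpleGraph V) (i j : V) :
    (extDoubleCover G).Adj (Sum.inl i) (Sum.inr j) ↔ (i = j ∨ G.Adj i j) := Iff.rfl

lemma edc_adj_rl {V : Type*} (G : SimpleGraph V) (i j : V) :
    (extDoubleCover G).Adj (Sum.inr i) (Sum.inl j) ↔ (j = i ∨ G.Adj j i) := Iff.rfl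

lemma edc_adj_ll {V : Type*} (G : SimpleGraph V) (i j : V) :
    ¬ (extDoubleCover G).Adj (Sum.inl i) (Sum.inl j) := fun h => h

lemma edc_adj_rr {V : Type*} (G : SimpleGraph V) (i j : V) :
    ¬ (extDoubleCover G).Adj (Sum.inr i) (Sum.inr j) := fun h => h

/-- `G` is `k`-CFCN*-choosable iff its extended double cover is
`k`-CFON*-choosable. -/
theorem stmt_11 {V : Type*} (G : SimpleGraph V) (k : ℕ) (hk : 1 ≤ k) :
    CFCNstarChoosable G k ↔ CFONstarChoosable (extDoubleCover G) k := by
  constructor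
  · intro h L hL
    obtain ⟨c₁, hc₁L, hc₁⟩ := h (fun v => L (Sum.inr v)) (fun v => hL _)
    obtain ⟨c₂, hc₂L, hc₂⟩ := h (fun v => L (Sum.inl v)) (fun v => hL _)
    refine ⟨fun u => match u with | Sum.inl i => c₂ i | Sum.inr i => c₁ i, ?_, ?_⟩
    · rintro (i | i) a ha
      · exact hc₂L i a ha
      · exact hc₁L i a ha
    · rintro (i | i)
      · obtain ⟨a, j, ⟨hadj, hcj⟩, huniq⟩ := hc₁ i
        refine ⟨a, Sum.inr j, ⟨?_, hcj⟩, ?_⟩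
        · rcases hadj with h' | h'
          · exact Or.inr h'
          · exact Or.inl h'.symm
        · rintro (u | u) ⟨hadj', hcu⟩
          · exact absurd hadj' (edc_adj_ll G i u)
          · have : u = j := huniq u ⟨((edc_adj_lr G i u).mp hadj').elim (fun h'' => Or.inr h''.symm) Or.inl, hcu⟩
            exact congrArg Sum.inr this
      · obtain ⟨a, j, ⟨hadj, hcj⟩, huniq⟩ := hc₂ i
        refine ⟨a, Sum.inl j, ⟨?_, hcj⟩, ?_⟩
        · rcases hadj with h' | h'
          · exact Or.inr h'.symm
          · exact Or.inl h'
        · rintro (u | u) ⟨hadj', hcu⟩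
          · have : u = j := huniq u ⟨((edc_adj_rl G i u).mp hadj').elim (fun h'' => Or.inr h'') (fun h'' => Or.inl h''.symm), hcu⟩
            exact congrArg Sum.inl this
          · exact absurd hadj' (edc_adj_rr G i u)
  · intro h L hL
    obtain ⟨c, hcL, hc⟩ := h (fun u => L (Sum.elim id id u))
      (fun u => by cases u <;> exact hL _)
    refine ⟨fun v => c (Sum.inr v), fun v a ha => hcL (Sum.inr v) a ha, ?_⟩
    intro v
    obtain ⟨a, u, ⟨hadj, hcu⟩, huniq⟩ := hc (Sum.inl v)
    obtain (j | j) := u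
    · exact absurd hadj (edc_adj_ll G v j)
    · refine ⟨a, j, ⟨?_, hcu⟩, ?_⟩
      · rcases (edc_adj_lr G v j).mp hadj with h' | h'
        · exact Or.inr h'.symm
        · exact Or.inl h'
      · rintro w ⟨hadj', hcw⟩
        have : Sum.inr w = Sum.inr j := huniq (Sum.inr w)
          ⟨(edc_adj_lr G v w).mpr (hadj'.elim Or.inr (fun h'' => Or.inl h''.symm)), hcw⟩
        exact Sum.inr.inj this
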